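/- Consider the four phases φᵢ(ξ,η,σ) built from ±⟨ξ⟩ ± ⟨ξ-η-σ⟩ ± ⟨η⟩ ± ⟨σ⟩ as in the cubic Klein–Gordon analysis. For φ₂(ξ,η,σ) := -⟨ξ⟩ + ⟨ξ-η-σ⟩ - ⟨η⟩ + ⟨σ⟩, the unique stationary point in (η,σ) is (η,σ) = (-ξ, ξ), there φ₂(ξ,-ξ,ξ) = 0, and the Hessian in (η,σ) at that point has determinant -⟨ξ⟩^{-6} and signature 0. -/

import Mathlib

/-- Japanese bracket `⟨ζ⟩ = (1 + ζ²)^{1/2}`. -/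
noncomputable def jb (ζ : ℝ) : ℝ := Real.sqrt (1 + ζ ^ 2)

/-- The phase `φ₂(ξ,η,σ) = -⟨ξ⟩ + ⟨ξ-η-σ⟩ - ⟨η⟩ + ⟨σ⟩`. -/
noncomputable def phi2 (ξ η σ : ℝ) : ℝ := -jb ξ + jb (ξ - η - σ) - jb η + jb σ

/-- `∂_η φ₂`. -/
noncomputable def P2 (ξ η σ : ℝ) : ℝ := -(ξ - η - σ) / jb (ξ - η - σ) - η / jb η

/-- `∂_σ φ₂`. -/
noncomputable def Q2 (ξ η σ : ℝ) : ℝ := -(ξ - η - σ) / jb (ξ - η - σ) + σ / jb σ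

lemma jb_pos (ζ : ℝ) : 0 < jb ζ := Real.sqrt_pos.mpr (by positivity)

lemma jb_sq (ζ : ℝ) : jb ζ ^ 2 = 1 + ζ ^ 2 := Real.sq_sqrt (by positivity)

lemma jb_neg (ζ : ℝ) : jb (-ζ) = jb ζ := by unfold jb; congr 1; ring

lemma hasDerivAt_jb (ζ : ℝ) : HasDerivAt jb (ζ / jb ζ) ζ := by
  have h1 : HasDerivAt (fun y : ℝ => 1 + y ^ 2) (2 * ζ) ζ := by
    simpa using (hasDerivAt_pow 2 ζ).const_add 1
  have h2 := (Real.hasDerivAt_sqrt (by positivity : (1 : ℝ) + ζ ^ 2 ≠ 0)).comp ζ h1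
  refine h2.congr_deriv ?_
  unfold jb
  have h0 : Real.sqrt (1 + ζ ^ 2) ≠ 0 := (jb_pos ζ).ne'
  field_simp

lemma hasDerivAt_ratio (x : ℝ) :
    HasDerivAt (fun y => y / jb y) (((jb x) ^ 3)⁻¹) x := by
  have h := (hasDerivAt_id x).div (hasDerivAt_jb x) (jb_pos x).ne'
  refine h.congr_deriv ?_
  have hp := (jb_pos x).ne'
  have hsq := jb_sq x
  have hkey : jb x * jb x - x * x = 1 := by nlinarith [jb_sq x]
  field_simp
  simp only [id]; rw [hsq]; ring

lemma ratio_strictMono : StrictMono (fun y : ℝ => y / jb y) :=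
  strictMono_of_hasDerivAt_pos (f' := fun y => ((jb y) ^ 3)⁻¹) hasDerivAt_ratio
    (fun y => by have := jb_pos y; positivity)

lemma ratio_inj {x y : ℝ} (h : x / jb x = y / jb y) : x = y :=
  ratio_strictMono.injective h

lemma hasDerivAt_P2_eta (ξ η σ : ℝ) :
    HasDerivAt (fun η' => P2 ξ η' σ)
      (((jb (ξ - η - σ)) ^ 3)⁻¹ - ((jb η) ^ 3)⁻¹) η := by
  have hin : HasDerivAt (fun η' : ℝ => ξ - η' - σ) (-1) η := by
    simpa using ((hasDerivAt_id η).const_sub ξ).sub_const σ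
  have h1 : HasDerivAt (fun η' => (ξ - η' - σ) / jb (ξ - η' - σ))
      (((jb (ξ - η - σ)) ^ 3)⁻¹ * (-1)) η := (hasDerivAt_ratio _).comp η hin
  have H := h1.neg.sub (hasDerivAt_ratio η)
  simp only [P2, neg_div]
  rw [show ((jb (ξ - η - σ)) ^ 3)⁻¹ - ((jb η) ^ 3)⁻¹
      = -(((jb (ξ - η - σ)) ^ 3)⁻¹ * (-1)) - ((jb η) ^ 3)⁻¹ by ring]
  exact H

lemma hasDerivAt_P2_sigma (ξ η σ : ℝ) :
    HasDerivAt (fun σ' => P2 ξ η σ')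
      (((jb (ξ - η - σ)) ^ 3)⁻¹) σ := by
  have hin : HasDerivAt (fun σ' : ℝ => ξ - η - σ') (-1) σ := by
    simpa using (hasDerivAt_id σ).const_sub (ξ - η)
  have h1 : HasDerivAt (fun σ' => (ξ - η - σ') / jb (ξ - η - σ'))
      (((jb (ξ - η - σ)) ^ 3)⁻¹ * (-1)) σ := (hasDerivAt_ratio _).comp σ hin
  have H := h1.neg.sub_const (η / jb η)
  simp only [P2, neg_div]
  rw [show ((jb (ξ - η - σ)) ^ 3)⁻¹
      = -(((jb (ξ - η - σ)) ^ 3)⁻¹ * (-1)) - 0 by ring]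
  simpa using H

lemma hasDerivAt_Q2_sigma (ξ η σ : ℝ) :
    HasDerivAt (fun σ' => Q2 ξ η σ')
      (((jb (ξ - η - σ)) ^ 3)⁻¹ + ((jb σ) ^ 3)⁻¹) σ := by
  have hin : HasDerivAt (fun σ' : ℝ => ξ - η - σ') (-1) σ := by
    simpa using (hasDerivAt_id σ).const_sub (ξ - η)
  have h1 : HasDerivAt (fun σ' => (ξ - η - σ') / jb (ξ - η - σ'))
      (((jb (ξ - η - σ)) ^ 3)⁻¹ * (-1)) σ := (hasDerivAt_ratio _).comp σ hin
  have H := h1.neg.add (hasDerivAt_ratio σ)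
  simp only [Q2, neg_div]
  rw [show ((jb (ξ - η - σ)) ^ 3)⁻¹ + ((jb σ) ^ 3)⁻¹
      = -(((jb (ξ - η - σ)) ^ 3)⁻¹ * (-1)) + ((jb σ) ^ 3)⁻¹ by ring]
  exact H

/-- The space-time resonance of the cubic phase `φ₂`: the unique stationary
point in `(η,σ)` is `(-ξ, ξ)`, where the phase vanishes and the Hessian has
determinant `-⟨ξ⟩⁻⁶` (hence, being negative, signature `0`). -/
theorem phi2_spacetime_resonance :
    (∀ ξ η σ : ℝ, HasDerivAt (fun η' => phi2 ξ η' σ) (P2 ξ η σ) η) ∧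
    (∀ ξ η σ : ℝ, HasDerivAt (fun σ' => phi2 ξ η σ') (Q2 ξ η σ) σ) ∧
    (∀ ξ η σ : ℝ, (P2 ξ η σ = 0 ∧ Q2 ξ η σ = 0) ↔ (η = -ξ ∧ σ = ξ)) ∧
    (∀ ξ : ℝ, phi2 ξ (-ξ) ξ = 0) ∧
    (∀ ξ : ℝ,
      deriv (fun η => P2 ξ η ξ) (-ξ) * deriv (fun σ => Q2 ξ (-ξ) σ) ξ -
        (deriv (fun σ => P2 ξ (-ξ) σ) ξ) ^ 2 = -((jb ξ) ^ 6)⁻¹ ∧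
      deriv (fun η => P2 ξ η ξ) (-ξ) * deriv (fun σ => Q2 ξ (-ξ) σ) ξ -
        (deriv (fun σ => P2 ξ (-ξ) σ) ξ) ^ 2 < 0) := by
  refine ⟨?_, ?_, ?_, ?_, ?_⟩
  · -- ∂_η
    intro ξ η σ
    have hin : HasDerivAt (fun η' : ℝ => ξ - η' - σ) (-1) η := by
      simpa using ((hasDerivAt_id η).const_sub ξ).sub_const σ
    have h1 : HasDerivAt (fun η' => jb (ξ - η' - σ))
        ((ξ - η - σ) / jb (ξ - η - σ) * (-1)) η := (hasDerivAt_jb _).comp η hin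
    have H := ((h1.const_add (-jb ξ)).sub (hasDerivAt_jb η)).add_const (jb σ)
    rw [show P2 ξ η σ
        = (ξ - η - σ) / jb (ξ - η - σ) * (-1) - η / jb η by unfold P2; ring]
    exact H
  · -- ∂_σ
    intro ξ η σ
    have hin : HasDerivAt (fun σ' : ℝ => ξ - η - σ') (-1) σ := by
      simpa using (hasDerivAt_id σ).const_sub (ξ - η)
    have h1 : HasDerivAt (fun σ' => jb (ξ - η - σ'))
        ((ξ - η - σ) / jb (ξ - η - σ) * (-1)) σ := (hasDerivAt_jb _).comp σ hin
    have H := ((h1.const_add (-jb ξ)).sub_const (jb η)).add (hasDerivAt_jb σ)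
    rw [show Q2 ξ η σ
        = (ξ - η - σ) / jb (ξ - η - σ) * (-1) + σ / jb σ by unfold Q2; ring]
    exact H
  · -- stationary points
    intro ξ η σ
    constructor
    · rintro ⟨hP, hQ⟩
      have hp := (jb_pos (ξ - η - σ)).ne'
      have hq := (jb_pos η).ne'
      have hs := (jb_pos σ).ne'
      have hu1 : (ξ - η - σ) / jb (ξ - η - σ) = (-η) / jb (-η) := by
        rw [jb_neg]
        unfold P2 at hP
        field_simp at hP ⊢
        linarith
      have hu2 : (ξ - η - σ) / jb (ξ - η - σ) = σ / jb σ := by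
        unfold Q2 at hQ
        field_simp at hQ ⊢
        linarith
      have e1 : ξ - η - σ = -η := ratio_inj hu1
      have e2 : ξ - η - σ = σ := ratio_inj hu2
      constructor <;> linarith
    · rintro ⟨hη, hσ⟩
      subst hη
      have h : ξ - -ξ - ξ = ξ := by ring
      constructor
      · unfold P2; rw [hσ, h, jb_neg]; ring
      · unfold Q2; rw [hσ, h]; ring
  · intro ξ
    have h : ξ - -ξ - ξ = ξ := by ring
    unfold phi2; rw [h, jb_neg]; ring
  · intro ξ
    have h1 : deriv (fun η => P2 ξ η ξ) (-ξ) = 0 := by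
      have hz : (fun η => P2 ξ η ξ) = fun _ => (0 : ℝ) := by
        funext η
        unfold P2
        rw [show ξ - η - ξ = -η by ring, jb_neg]
        ring
      rw [hz]
      simp
    have h2 : deriv (fun σ => P2 ξ (-ξ) σ) ξ = ((jb ξ) ^ 3)⁻¹ := by
      have hd := hasDerivAt_P2_sigma ξ (-ξ) ξ
      rw [show ξ - -ξ - ξ = ξ by ring] at hd
      exact hd.deriv
    have h3 : deriv (fun σ => Q2 ξ (-ξ) σ) ξ = ((jb ξ) ^ 3)⁻¹ + ((jb ξ) ^ 3)⁻¹ := by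
      have hd := hasDerivAt_Q2_sigma ξ (-ξ) ξ
      rw [show ξ - -ξ - ξ = ξ by ring] at hd
      exact hd.deriv
    rw [h1, h2, h3]
    have hp : (0:ℝ) < jb ξ := jb_pos ξ
    constructor
    · rw [← inv_pow, ← pow_mul]
      ring_nf
    · have hcp : (0:ℝ) < ((jb ξ) ^ 3)⁻¹ := by positivity
      nlinarith
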